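/- Let y_k = A·y_{k−1} be the unmasked Boolean BFS recurrence and x_{k+1} = A_k·x_k the symmetric masked recurrence, where A_k = S_k A S_k, S_k is the selection matrix of V_k = V_{k−1} \ supp(x_{k−1}), and x_1 = y_1 is the source indicator vector. Then S_k·x_k = S_k·y_k for all k, and consequently x_{k+1} = A_k·y_k = A_k·A^{k−1}·x_1. -/

import Mathlib

/-- Matrix-vector multiplication over the Boolean semiring (OR/AND). -/
def bVecMul {n : ℕ} (A : Matrix (Fin n) (Fin n) Bool) (x : Fin n → Bool) : Fin n → Bool :=
  fun i => decide (∃ j, A i j = true ∧ x j = true)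

/-- Support of a Boolean vector. -/
def bSupp {n : ℕ} (x : Fin n → Bool) : Finset (Fin n) :=
  Finset.univ.filter fun i => x i = true

/-- `bMask R C A` zeroes out the rows of `A` outside `R` and the columns outside `C`. -/
def bMask {n : ℕ} (R C : Finset (Fin n)) (A : Matrix (Fin n) (Fin n) Bool) :
    Matrix (Fin n) (Fin n) Bool :=
  Matrix.of fun i j => decide (i ∈ R) && A i j && decide (j ∈ C)

/-- Masked BFS recurrence: `bfs A s k = (V_{k+1}, x_{k+1})` where `V_1 = univ`,
`x_1` is the indicator of `s`, `V_{k+1} = V_k \ supp x_k` and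
`x_{k+1} = A[V_{k+1}, V_k] ⬝ x_k` over the Boolean semiring. -/
def bfs {n : ℕ} (A : Matrix (Fin n) (Fin n) Bool) (s : Fin n) :
    ℕ → Finset (Fin n) × (Fin n → Bool)
  | 0 => (Finset.univ, fun v => decide (v = s))
  | k + 1 =>
    let p := bfs A s k
    let V' := p.1 \ bSupp p.2
    (V', bVecMul (bMask V' p.1 A) p.2)

/-- `hasWalk A s k v` : there is a walk of length exactly `k` from `s` to `v`,
where `A i j = true` means there is an edge from `j` to `i`. -/
def hasWalk {n : ℕ} (A : Matrix (Fin n) (Fin n) Bool) (s : Fin n) : ℕ → Fin n → Prop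
  | 0, v => v = s
  | k + 1, v => ∃ j, hasWalk A s k j ∧ A v j = true

/-- Symmetric masked BFS recurrence: `sbfs A s k = (V_{k+1}, x_{k+1})` where
`x_{k+1} = A[V_k, V_k] x_k` and `V_{k+1} = V_k \ supp x_k`. -/
def sbfs {n : ℕ} (A : Matrix (Fin n) (Fin n) Bool) (s : Fin n) :
    ℕ → Finset (Fin n) × (Fin n → Bool)
  | 0 => (Finset.univ, fun v => decide (v = s))
  | k + 1 =>
    let p := sbfs A s k
    (p.1 \ bSupp p.2, bVecMul (bMask p.1 p.1 A) p.2)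

/-- With `y_k = A y_{k-1}` the unmasked Boolean recurrence and
`x_{k+1} = A_k x_k` the symmetric masked recurrence (`A_k = S_k A S_k`),
one has `S_k x_k = S_k y_k` for all `k`, and consequently
`x_{k+1} = A_k y_k = A_k A^{k-1} x₁`.  (Here `(sbfs A s k).1 = V_{k+1}`,
`(sbfs A s k).2 = x_{k+1}` and `(bVecMul A)^[k] x₁ = y_{k+1}`.) -/
lemma sbfs_fst_succ {n : ℕ} (A : Matrix (Fin n) (Fin n) Bool) (s : Fin n) (k : ℕ) :
    (sbfs A s (k+1)).1 = (sbfs A s k).1 \ bSupp (sbfs A s k).2 := rfl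

lemma sbfs_snd_succ {n : ℕ} (A : Matrix (Fin n) (Fin n) Bool) (s : Fin n) (k : ℕ) :
    (sbfs A s (k+1)).2 = bVecMul (bMask (sbfs A s k).1 (sbfs A s k).1 A) (sbfs A s k).2 := rfl

lemma mem_sbfs_fst {n : ℕ} (A : Matrix (Fin n) (Fin n) Bool) (s : Fin n) (k : ℕ) (i : Fin n) :
    i ∈ (sbfs A s k).1 ↔ ∀ m < k, (sbfs A s m).2 i = false := by
  induction k with
  | zero => simp [sbfs]
  | succ k ih =>
    rw [sbfs_fst_succ, Finset.mem_sdiff, ih]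
    simp only [bSupp, Finset.mem_filter, Finset.mem_univ, true_and, Nat.lt_succ_iff_lt_or_eq]
    constructor
    · rintro ⟨h1, h2⟩ m (hm | rfl)
      · exact h1 m hm
      · exact Bool.not_eq_true _ |>.mp h2
    · intro h
      exact ⟨fun m hm => h m (Or.inl hm), by simp [h k (Or.inr rfl)]⟩

lemma sbfs_agree {n : ℕ} (A : Matrix (Fin n) (Fin n) Bool) (s : Fin n) (k : ℕ) :
    ∀ i ∈ (sbfs A s k).1,
      (sbfs A s k).2 i = ((bVecMul A)^[k] (fun v => decide (v = s))) i := by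
  induction k with
  | zero => intro i _; rfl
  | succ k ih =>
    intro i hi
    have hiV : i ∈ (sbfs A s k).1 := by
      rw [mem_sbfs_fst] at hi ⊢
      exact fun m hm => hi m (hm.trans (Nat.lt_succ_self k))
    rw [sbfs_snd_succ, Function.iterate_succ_apply']
    simp only [bVecMul, bMask, Matrix.of_apply]
    refine decide_eq_decide.mpr ?_
    constructor
    · rintro ⟨j, hAij, hxj⟩
      simp only [Bool.and_eq_true, decide_eq_true_eq] at hAij
      obtain ⟨⟨_, hA⟩, hjV⟩ := hAij
      exact ⟨j, hA, (ih j hjV).symm.trans hxj ▸ rfl⟩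
    · rintro ⟨j, hA, hyj⟩
      by_cases hjV : j ∈ (sbfs A s k).1
      · refine ⟨j, ?_, ?_⟩
        · simp [hiV, hA, hjV]
        · rw [ih j hjV]; exact hyj
      · exfalso
        rw [mem_sbfs_fst] at hjV
        push_neg at hjV
        obtain ⟨m, hmk, hxm⟩ := hjV
        -- take minimal m with x_m j = true
        have hex : ∃ m, (sbfs A s m).2 j = true := ⟨m, by simpa using hxm⟩
        set m0 := Nat.find hex with hm0
        have hm0k : m0 < k := lt_of_le_of_lt (Nat.find_le (by simpa using hxm)) hmk
        have hjVm0 : j ∈ (sbfs A s m0).1 := by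
          rw [mem_sbfs_fst]
          intro l hl
          exact Bool.not_eq_true _ |>.mp (Nat.find_min hex hl)
        have hiVm0 : i ∈ (sbfs A s m0).1 := by
          rw [mem_sbfs_fst]
          intro l hl
          exact (mem_sbfs_fst A s (k+1) i).mp hi l (hl.trans (hm0k.trans (Nat.lt_succ_self k)))
        have hx1 : (sbfs A s (m0 + 1)).2 i = true := by
          rw [sbfs_snd_succ]
          simp only [bVecMul, bMask, Matrix.of_apply, decide_eq_true_eq]
          exact decide_eq_true ⟨j, by simp [hiVm0, hA, hjVm0], Nat.find_spec hex⟩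
        have := (mem_sbfs_fst A s (k+1) i).mp hi (m0 + 1) (Nat.succ_lt_succ hm0k)
        simp [hx1] at this

theorem masked_eq_transform_unmasked {n : ℕ} (A : Matrix (Fin n) (Fin n) Bool)
    (hSym : ∀ i j, A i j = A j i) (s : Fin n) (k : ℕ) :
    ((fun i => decide (i ∈ (sbfs A s k).1) && (sbfs A s k).2 i) =
      fun i => decide (i ∈ (sbfs A s k).1) &&
        ((bVecMul A)^[k] (fun v => decide (v = s))) i) ∧
    (sbfs A s (k + 1)).2 =
      bVecMul (bMask (sbfs A s k).1 (sbfs A s k).1 A)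
        ((bVecMul A)^[k] (fun v => decide (v = s))) := by
  constructor
  · funext i
    by_cases h : i ∈ (sbfs A s k).1
    · simp [h, sbfs_agree A s k i h]
    · simp [h]
  · funext i
    rw [sbfs_snd_succ]
    simp only [bVecMul, bMask, Matrix.of_apply]
    refine decide_eq_decide.mpr ?_
    constructor <;> rintro ⟨j, hm, hx⟩ <;> refine ⟨j, hm, ?_⟩ <;>
      · simp only [Bool.and_eq_true, decide_eq_true_eq] at hm
        rw [sbfs_agree A s k j hm.2] at * <;> assumption
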